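/- No computably enumerable subset of ω is m-rigid. -/

import Mathlib

open Nat.Partrec (Code)
open Nat.Partrec.Code

/-- A total computable `Nat.find` given a computable predicate that is
always eventually true. -/
lemma computable_nat_find {p : ℕ → ℕ → Bool} (hp : Computable₂ p)
    (H : ∀ x, ∃ s, p x s = true) :
    Computable fun x => Nat.find (H x) := by
  have h1 : Partrec fun x : ℕ => Nat.rfind fun s => (p x s : Part Bool) :=
    Partrec.rfind hp.partrec₂
  refine h1.of_eq_tot fun x => ?_
  refine Nat.mem_rfind.2 ⟨?_, fun {m} hm => ?_⟩
  · exact Part.mem_some_iff.2 (Nat.find_spec (H x)).symm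
  · have h2 : p x m = false := by simpa using Nat.find_min (H x) hm
    exact Part.mem_some_iff.2 h2.symm

/-- `A` is m-rigid: every total computable m-autoreduction of `A`
(i.e. `k` with `∀ x, x ∈ A ↔ k x ∈ A`) is eventually the identity. -/
def MRigid (A : Set ℕ) : Prop :=
  ∀ k : ℕ → ℕ, Computable k → (∀ x, x ∈ A ↔ k x ∈ A) → {x | k x ≠ x}.Finite

/-- No computably enumerable set is m-rigid. -/
theorem stmt_4 (A : Set ℕ) (hA : REPred (· ∈ A)) : ¬ MRigid A := by
  intro hM
  by_cases hfin : A.Finite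
  · -- finite case: shift the (cofinite) complement
    obtain ⟨N, hN⟩ : ∃ N, ∀ a ∈ A, a < N := by
      rcases hfin.bddAbove with ⟨b, hb⟩
      exact ⟨b + 1, fun a ha => Nat.lt_succ_of_le (hb ha)⟩
    set k : ℕ → ℕ := fun x => if x < N then x else x + 1 with hkdef
    have hk : Computable k := by
      have : Primrec k :=
        Primrec.ite (Primrec.nat_lt.comp .id (.const N)) .id Primrec.succ
      exact this.to_comp
    have haut : ∀ x, x ∈ A ↔ k x ∈ A := by
      intro x
      by_cases h : x < N
      · simp [hkdef, h]
      · have h1 : x ∉ A := fun hx => h (hN x hx)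
        have h2 : x + 1 ∉ A := fun hx => by have := hN _ hx; omega
        simp [hkdef, h, h1, h2]
    have hfinset := hM k hk haut
    have hsub : Set.Ici N ⊆ {x | k x ≠ x} := by
      intro x hx
      have hn : ¬ x < N := Nat.not_lt.2 hx
      simp only [hkdef, Set.mem_setOf_eq]
      rw [if_neg hn]
      omega
    exact (Set.Ici_infinite N) (hfinset.subset hsub)
  · have hinf : A.Infinite := hfin
    obtain ⟨a₀, ha₀⟩ := hinf.nonempty
    -- get a code for (the characteristic partial function of) A
    have pf : Partrec fun a : ℕ =>
        (Part.assert (a ∈ A) fun _ => Part.some ()).map fun _ => (0 : ℕ) :=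
      hA.map ((Computable.const 0).comp Computable.fst).to₂
    obtain ⟨c, hc⟩ := exists_code.1 (Partrec.nat_iff.1 pf)
    have hmem : ∀ x, x ∈ A ↔ ∃ s, (evaln s c x).isSome := by
      intro x
      have hdom : (eval c x).Dom ↔ x ∈ A := by
        rw [hc]; simp [Part.assert]
      rw [← hdom, Part.dom_iff_mem]
      constructor
      · rintro ⟨y, hy⟩
        obtain ⟨s, hs⟩ := evaln_complete.1 hy
        exact ⟨s, by simp [Option.isSome_iff_exists]; exact ⟨y, hs⟩⟩
      · rintro ⟨s, hs⟩
        obtain ⟨y, hy⟩ := Option.isSome_iff_exists.1 hs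
        exact ⟨y, evaln_complete.2 ⟨s, hy⟩⟩
    -- a computable enumeration of A
    set P : ℕ → ℕ → Bool := fun x s => (evaln s c x).isSome with hPdef
    have hP : Primrec₂ P :=
      Primrec.option_isSome.comp
        (primrec_evaln.comp <| (Primrec.snd.pair (Primrec.const c)).pair Primrec.fst)
    set h : ℕ → ℕ := fun n => bif P n.unpair.1 n.unpair.2 then n.unpair.1 else a₀
      with hhdef
    have hhprim : Primrec h := by
      have hu1 : Primrec fun n : ℕ => n.unpair.1 := Primrec.fst.comp Primrec.unpair
      have hu2 : Primrec fun n : ℕ => n.unpair.2 := Primrec.snd.comp Primrec.unpair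
      exact Primrec.cond (hP.comp hu1 hu2) hu1 (Primrec.const a₀)
    have hhA : ∀ n, h n ∈ A := by
      intro n
      by_cases hb : P n.unpair.1 n.unpair.2 = true
      · have : n.unpair.1 ∈ A := (hmem _).2 ⟨n.unpair.2, hb⟩
        simpa [hhdef, hb] using this
      · simp only [Bool.not_eq_true] at hb
        simpa [hhdef, hb] using ha₀
    have hcov : ∀ x ∈ A, ∃ n, h n = x := by
      intro x hx
      obtain ⟨s, hs⟩ := (hmem x).1 hx
      refine ⟨Nat.pair x s, ?_⟩
      simp [hhdef, hPdef, Nat.unpair_pair, hs]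
    -- running maximum: a monotone unbounded enumeration of elements of A
    set g : ℕ → ℕ := fun n => Nat.rec (h 0) (fun m ih => max ih (h (m + 1))) n
      with hgdef
    have hgprim : Primrec g :=
      Primrec.nat_rec₁ (h 0)
        (Primrec.nat_max.comp Primrec.snd (hhprim.comp (Primrec.succ.comp Primrec.fst))).to₂
    have hgsucc : ∀ n, g (n + 1) = max (g n) (h (n + 1)) := fun n => rfl
    have hgA : ∀ n, g n ∈ A := by
      intro n
      induction n with
      | zero => exact hhA 0
      | succ m ih =>
        rw [hgsucc]
        rcases max_choice (g m) (h (m + 1)) with hcase | hcase <;> rw [hcase]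
        · exact ih
        · exact hhA (m + 1)
    have hgmono : Monotone g :=
      monotone_nat_of_le_succ fun n => by rw [hgsucc]; exact le_max_left _ _
    have hgh : ∀ n, h n ≤ g n := by
      intro n
      cases n with
      | zero => exact le_refl _
      | succ m => rw [hgsucc]; exact le_max_right _ _
    have gunb : ∀ x : ℕ, ∃ s, (decide (x ≤ g s)) = true := by
      intro x
      obtain ⟨b, hbA, hxb⟩ := hinf.exists_gt x
      obtain ⟨n, hn⟩ := hcov b hbA
      exact ⟨n, decide_eq_true (le_trans (le_of_lt hxb) (hn ▸ hgh n))⟩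
    -- the least stage where the running maximum reaches x
    set F : ℕ → ℕ := fun x => Nat.find (gunb x) with hFdef
    have hF : Computable F := by
      refine computable_nat_find ?_ gunb
      exact Primrec₂.to_comp (Primrec.nat_le.comp Primrec.fst (hgprim.comp Primrec.snd)).decide
    have key1 : ∀ x, x ≤ g (F x) := fun x => of_decide_eq_true (Nat.find_spec (gunb x))
    have key2 : ∀ x n, x ≤ g n → F x ≤ n := fun x n hx =>
      Nat.find_min' (gunb x) (decide_eq_true hx)
    -- the autoreduction
    set k : ℕ → ℕ := fun x => bif g (F x) == x then g (F (x + 1)) else x with hkdef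
    have hk : Computable k := by
      refine Computable.cond ?_ ?_ Computable.id
      · have : Computable fun x : ℕ => g (F x) := hgprim.to_comp.comp hF
        exact ((Primrec.eq (α := ℕ)).decide.to_comp.comp this Computable.id)
      · exact hgprim.to_comp.comp (hF.comp (Primrec.succ.to_comp))
    have haut : ∀ x, x ∈ A ↔ k x ∈ A := by
      intro x
      by_cases hgf : g (F x) = x
      · have hx : x ∈ A := hgf ▸ hgA (F x)
        have hk' : k x = g (F (x + 1)) := by simp [hkdef, hgf]
        rw [hk']
        exact iff_of_true hx (hgA _)
      · have hk' : k x = x := by simp [hkdef, Bool.cond_eq_ite, beq_iff_eq, hgf]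
        rw [hk']
    have hnonfix : ∀ n, k (g n) ≠ g n := by
      intro n
      have hFle : F (g n) ≤ n := key2 _ _ (le_refl _)
      have heq : g (F (g n)) = g n :=
        le_antisymm (hgmono hFle) (key1 (g n))
      have hk' : k (g n) = g (F (g n + 1)) := by simp [hkdef, heq]
      have : g n + 1 ≤ g (F (g n + 1)) := key1 (g n + 1)
      omega
    have hfinset := hM k hk haut
    have hsub : Set.range g ⊆ {x | k x ≠ x} := by
      rintro _ ⟨n, rfl⟩
      exact hnonfix n
    have hrinf : (Set.range g).Infinite := by
      refine Set.infinite_of_not_bddAbove ?_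
      rintro ⟨b, hb⟩
      obtain ⟨s, hs⟩ := gunb (b + 1)
      have h1 : b + 1 ≤ g s := of_decide_eq_true hs
      have h2 : g s ≤ b := hb (Set.mem_range_self s)
      omega
    exact hrinf (hfinset.subset hsub)
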